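/- (Coupled LMI implies the decoupled SDP relaxation) Let λ₁, …, λₘ ≥ 0 with Σ_{i=1}^m λᵢ > 0, and suppose there exist a symmetric positive definite n×n matrix P₀ and a vector x̃₀ ∈ ℝⁿ such that the (n+1)×(n+1) block matrix N(P₀, x̃₀, λ) is positive semidefinite. Then the (n+1)×(n+1) block matrix M(λ) is positive semidefinite. -/

import Mathlib

open Matrix

/-- The symmetric `(n+1) × (n+1)` block matrix `M(λ)` of the decoupled SDP relaxation:
`[[1 - Σᵢλᵢ + ΣᵢλᵢxᵢᵀPᵢ⁻¹xᵢ, (ΣᵢλᵢPᵢ⁻¹xᵢ)ᵀ], [ΣᵢλᵢPᵢ⁻¹xᵢ, ΣᵢλᵢPᵢ⁻¹]]`. -/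
noncomputable def decoupledBlockM {n m : ℕ} (x : Fin m → (Fin n → ℝ))
    (P : Fin m → Matrix (Fin n) (Fin n) ℝ) (lam : Fin m → ℝ) :
    Matrix (Unit ⊕ Fin n) (Unit ⊕ Fin n) ℝ :=
  Matrix.fromBlocks
    (Matrix.of fun _ _ => 1 - (∑ i, lam i) + ∑ i, lam i * (x i ⬝ᵥ ((P i)⁻¹ *ᵥ x i)))
    (Matrix.replicateRow Unit (∑ i, lam i • ((P i)⁻¹ *ᵥ x i)))
    (Matrix.replicateCol Unit (∑ i, lam i • ((P i)⁻¹ *ᵥ x i)))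
    (∑ i, lam i • (P i)⁻¹)

/-- The symmetric `(n+1) × (n+1)` block matrix `N(P₀, x̃₀, λ)`:
`[[Σᵢ λᵢ Pᵢ⁻¹ - P₀⁻¹, x̃₀ - Σᵢ λᵢ Pᵢ⁻¹xᵢ],
  [(x̃₀ - Σᵢ λᵢ Pᵢ⁻¹xᵢ)ᵀ, 1 + Σᵢ λᵢ(xᵢᵀPᵢ⁻¹xᵢ - 1) - x̃₀ᵀP₀x̃₀]]`. -/
noncomputable def sdpBlockN {n m : ℕ} (x : Fin m → (Fin n → ℝ))
    (P : Fin m → Matrix (Fin n) (Fin n) ℝ)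
    (P₀ : Matrix (Fin n) (Fin n) ℝ) (xt : Fin n → ℝ) (lam : Fin m → ℝ) :
    Matrix (Fin n ⊕ Unit) (Fin n ⊕ Unit) ℝ :=
  Matrix.fromBlocks
    ((∑ i, lam i • (P i)⁻¹) - P₀⁻¹)
    (Matrix.replicateCol Unit (xt - ∑ i, lam i • ((P i)⁻¹ *ᵥ x i)))
    (Matrix.replicateRow Unit (xt - ∑ i, lam i • ((P i)⁻¹ *ᵥ x i)))
    (Matrix.of fun _ _ =>
      1 + (∑ i, lam i * (x i ⬝ᵥ ((P i)⁻¹ *ᵥ x i) - 1)) - xt ⬝ᵥ (P₀ *ᵥ xt))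

/-- (Coupled LMI implies the decoupled SDP relaxation) If there exist a symmetric positive
definite `P₀` and a vector `x̃₀` with `N(P₀, x̃₀, λ)` positive semidefinite, then `M(λ)` is
positive semidefinite. -/
theorem coupled_implies_decoupled (n m : ℕ) (hn : 0 < n) (hm : 0 < m)
    (x : Fin m → (Fin n → ℝ)) (P : Fin m → Matrix (Fin n) (Fin n) ℝ)
    (hP : ∀ i, (P i).PosDef)
    (lam : Fin m → ℝ) (hlam : ∀ i, 0 ≤ lam i) (hlampos : 0 < ∑ i, lam i)
    (hex : ∃ (P₀ : Matrix (Fin n) (Fin n) ℝ) (xt : Fin n → ℝ),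
      P₀.PosDef ∧ (sdpBlockN x P P₀ xt lam).PosSemidef) :
    (decoupledBlockM x P lam).PosSemidef := by
  obtain ⟨P₀, xt, hP₀, hN⟩ := hex
  unfold sdpBlockN at hN
  unfold decoupledBlockM
  set Q : Matrix (Fin n) (Fin n) ℝ := ∑ i, lam i • (P i)⁻¹ with hQ
  set a : Fin n → ℝ := ∑ i, lam i • ((P i)⁻¹ *ᵥ x i) with ha
  set c : ℝ := 1 - (∑ i, lam i) + ∑ i, lam i * (x i ⬝ᵥ ((P i)⁻¹ *ᵥ x i)) with hc
  have hQsymm : Qᵀ = Q := by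
    rw [hQ, transpose_sum]
    refine Finset.sum_congr rfl fun i _ => ?_
    have h := (hP i).isHermitian.inv
    rw [IsHermitian, conjTranspose_eq_transpose_of_trivial] at h
    rw [transpose_smul, h]
  have hP₀inv : (P₀⁻¹).PosSemidef := hP₀.inv.posSemidef
  rw [posSemidef_iff_dotProduct_mulVec]
  constructor
  · show _ᴴ = _
    rw [conjTranspose_eq_transpose_of_trivial, fromBlocks_transpose, transpose_replicateRow,
      transpose_replicateCol, hQsymm, show (of fun _ _ => c : Matrix Unit Unit ℝ)ᵀ = of fun _ _ => c from rfl]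
  · intro v
    set t := v (Sum.inl ()) with htd
    set y : Fin n → ℝ := fun j => v (Sum.inr j) with hyd
    have hv : v = Sum.elim (fun _ => t) y := by
      funext z; cases z with
      | inl u => cases u; rfl
      | inr j => rfl
    have h1 := hN.dotProduct_mulVec_nonneg (Sum.elim (-y) (fun _ => t))
    have h2 := hP₀inv.dotProduct_mulVec_nonneg (y + t • (P₀ *ᵥ xt))
    rw [hv]
    have hP₀symm : P₀ᵀ = P₀ := by
      have h := hP₀.isHermitian
      rwa [IsHermitian, conjTranspose_eq_transpose_of_trivial] at h
    have hP₀invsymm : (P₀⁻¹)ᵀ = P₀⁻¹ := by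
      have h := hP₀.isHermitian.inv
      rwa [IsHermitian, conjTranspose_eq_transpose_of_trivial] at h
    have hinv : P₀⁻¹ *ᵥ (P₀ *ᵥ xt) = xt := by
      rw [mulVec_mulVec, nonsing_inv_mul _ hP₀.det_pos.ne'.isUnit, one_mulVec]
    have hsd : ∀ u v : Fin n → ℝ, (P₀⁻¹ *ᵥ u) ⬝ᵥ v = u ⬝ᵥ (P₀⁻¹ *ᵥ v) := by
      intro u v
      rw [dotProduct_mulVec, ← mulVec_transpose, hP₀invsymm]
    simp only [star_trivial, fromBlocks_mulVec, sumElim_dotProduct_sumElim,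
      Sum.elim_comp_inl, Sum.elim_comp_inr, sub_mulVec, mulVec_add, mulVec_neg,
      mulVec_smul, replicateRow_mulVec_eq_const, dotProduct_add, add_dotProduct,
      dotProduct_sub, sub_dotProduct, dotProduct_neg, neg_dotProduct,
      dotProduct_smul, smul_dotProduct, smul_eq_mul] at h1 h2 ⊢
    have hcol : ∀ w : Fin n → ℝ, (Matrix.replicateCol Unit w *ᵥ fun _ => t) = t • w := by
      intro w; funext i; simp [Matrix.mulVec, Matrix.replicateCol, dotProduct, mul_comm]
    have hof : ∀ r : ℝ, ((fun _ => t) ⬝ᵥ (Matrix.of (fun _ _ => r) : Matrix Unit Unit ℝ) *ᵥ fun _ => t) = r * t * t := by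
      intro r; simp [Matrix.mulVec, dotProduct]; ring
    have hconst : ∀ r : ℝ, ((fun _ : Unit => t) ⬝ᵥ Function.const Unit r) = t * r := by
      intro r; simp [dotProduct]
    have hd : (1 + (∑ i, lam i * (x i ⬝ᵥ ((P i)⁻¹ *ᵥ x i) - 1)) - xt ⬝ᵥ (P₀ *ᵥ xt))
        = c - xt ⬝ᵥ (P₀ *ᵥ xt) := by
      rw [hc]
      simp [mul_sub, Finset.sum_sub_distrib, mul_one]
      ring
    simp only [hcol, hof, hconst, dotProduct_smul, smul_eq_mul, hinv, hd,
      dotProduct_sub, sub_dotProduct] at h1 h2 ⊢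
    rw [dotProduct_comm (P₀ *ᵥ xt) (P₀⁻¹ *ᵥ y), hsd, hinv, dotProduct_comm (P₀ *ᵥ xt) xt] at h2
    rw [dotProduct_comm a y, dotProduct_comm xt y] at h1
    rw [dotProduct_comm a y] at *
    clear_value Q a c t y
    linarith [h1, h2]
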